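/- Let h, u, v : ℝ² → ℝ be C¹ functions with h > 0, and define F = h·(u,v), G = (1/2)(u² + v²) + g h, ω = ∂v/∂x − ∂u/∂y + f_c, and e = (1/2) h (u²+v²) + (1/2) g h². If ∂h/∂t + div F = 0 and ∂(u,v)/∂t + ω·(−v, u) + ∇G = 0, then ∂e/∂t + div(G F) = 0. -/

import Mathlib

/-- Partial derivative in time of a field `f t x y`. -/
noncomputable def pt (f : ℝ → ℝ → ℝ → ℝ) (t x y : ℝ) : ℝ :=
  deriv (fun s => f s x y) t

/-- Partial derivative in `x` of a field `f t x y`. -/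
noncomputable def px (f : ℝ → ℝ → ℝ → ℝ) (t x y : ℝ) : ℝ :=
  deriv (fun s => f t s y) x

/-- Partial derivative in `y` of a field `f t x y`. -/
noncomputable def py (f : ℝ → ℝ → ℝ → ℝ) (t x y : ℝ) : ℝ :=
  deriv (fun s => f t x s) y

lemma sliceT' {f : ℝ → ℝ → ℝ → ℝ}
    (hf : ContDiff ℝ 1 (fun p : ℝ × ℝ × ℝ => f p.1 p.2.1 p.2.2)) (t x y : ℝ) :
    HasDerivAt (fun s => f s x y) (pt f t x y) t := by
  have hd : DifferentiableAt ℝ (fun s : ℝ => f s x y) t :=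
    (hf.differentiable one_ne_zero (t, x, y)).comp (f := fun s : ℝ => (s, x, y)) t
      (differentiableAt_id.prodMk ((differentiableAt_const x).prodMk (differentiableAt_const y)))
  exact hd.hasDerivAt

lemma sliceX' {f : ℝ → ℝ → ℝ → ℝ}
    (hf : ContDiff ℝ 1 (fun p : ℝ × ℝ × ℝ => f p.1 p.2.1 p.2.2)) (t x y : ℝ) :
    HasDerivAt (fun s => f t s y) (px f t x y) x := by
  have hd : DifferentiableAt ℝ (fun s : ℝ => f t s y) x :=
    (hf.differentiable one_ne_zero (t, x, y)).comp (f := fun s : ℝ => (t, s, y)) x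
      ((differentiableAt_const t).prodMk (differentiableAt_id.prodMk (differentiableAt_const y)))
  exact hd.hasDerivAt

lemma sliceY' {f : ℝ → ℝ → ℝ → ℝ}
    (hf : ContDiff ℝ 1 (fun p : ℝ × ℝ × ℝ => f p.1 p.2.1 p.2.2)) (t x y : ℝ) :
    HasDerivAt (fun s => f t x s) (py f t x y) y := by
  have hd : DifferentiableAt ℝ (fun s : ℝ => f t x s) y :=
    (hf.differentiable one_ne_zero (t, x, y)).comp (f := fun s : ℝ => (t, x, s)) y
      ((differentiableAt_const t).prodMk ((differentiableAt_const x).prodMk differentiableAt_id))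
  exact hd.hasDerivAt

theorem nonlinear_energy_continuity (g fc : ℝ) (hg : 0 < g)
    (h u v : ℝ → ℝ → ℝ → ℝ)
    (hC1h : ContDiff ℝ 1 (fun p : ℝ × ℝ × ℝ => h p.1 p.2.1 p.2.2))
    (hC1u : ContDiff ℝ 1 (fun p : ℝ × ℝ × ℝ => u p.1 p.2.1 p.2.2))
    (hC1v : ContDiff ℝ 1 (fun p : ℝ × ℝ × ℝ => v p.1 p.2.1 p.2.2))
    (hpos : ∀ t x y, 0 < h t x y)
    (F1 F2 G ω e : ℝ → ℝ → ℝ → ℝ)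
    (hF1 : ∀ t x y, F1 t x y = h t x y * u t x y)
    (hF2 : ∀ t x y, F2 t x y = h t x y * v t x y)
    (hG : ∀ t x y, G t x y = (1 / 2) * (u t x y ^ 2 + v t x y ^ 2) + g * h t x y)
    (hω : ∀ t x y, ω t x y = px v t x y - py u t x y + fc)
    (he : ∀ t x y,
      e t x y = (1 / 2) * h t x y * (u t x y ^ 2 + v t x y ^ 2)
        + (1 / 2) * g * h t x y ^ 2)
    (mass : ∀ t x y, pt h t x y + px F1 t x y + py F2 t x y = 0)
    (momu : ∀ t x y, pt u t x y + ω t x y * (-(v t x y)) + px G t x y = 0)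
    (momv : ∀ t x y, pt v t x y + ω t x y * u t x y + py G t x y = 0) :
    ∀ t x y,
      pt e t x y + px (fun t x y => G t x y * F1 t x y) t x y
        + py (fun t x y => G t x y * F2 t x y) t x y = 0 := by
  intro t x y
  have Hht := sliceT' hC1h t x y
  have Hut := sliceT' hC1u t x y
  have Hvt := sliceT' hC1v t x y
  have Hhx := sliceX' hC1h t x y
  have Hux := sliceX' hC1u t x y
  have Hvx := sliceX' hC1v t x y
  have Hhy := sliceY' hC1h t x y
  have Huy := sliceY' hC1u t x y
  have Hvy := sliceY' hC1v t x y
  -- pt e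
  have hpte : pt e t x y
      = ((1 / 2 * pt h t x y) * (u t x y ^ 2 + v t x y ^ 2)
          + (1 / 2 * h t x y) * (2 * u t x y ^ 1 * pt u t x y + 2 * v t x y ^ 1 * pt v t x y))
        + (1 / 2 * g) * (2 * h t x y ^ 1 * pt h t x y) := by
    have hfun : (fun s => e s x y)
        = fun s => 1 / 2 * h s x y * (u s x y ^ 2 + v s x y ^ 2) + 1 / 2 * g * h s x y ^ 2 :=
      funext fun s => he s x y
    rw [pt, hfun]
    exact (((Hht.const_mul (1 / 2)).mul ((Hut.pow 2).add (Hvt.pow 2))).add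
      ((Hht.pow 2).const_mul (1 / 2 * g))).deriv
  -- px F1
  have hpxF1 : px F1 t x y = px h t x y * u t x y + h t x y * px u t x y := by
    have hfun : (fun s => F1 t s y) = fun s => h t s y * u t s y := funext fun s => hF1 t s y
    rw [px, hfun]; exact (Hhx.mul Hux).deriv
  have hpyF2 : py F2 t x y = py h t x y * v t x y + h t x y * py v t x y := by
    have hfun : (fun s => F2 t x s) = fun s => h t x s * v t x s := funext fun s => hF2 t x s
    rw [py, hfun]; exact (Hhy.mul Hvy).deriv
  -- px G, py G
  have hpxG : px G t x y
      = 1 / 2 * (2 * u t x y ^ 1 * px u t x y + 2 * v t x y ^ 1 * px v t x y)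
        + g * px h t x y := by
    have hfun : (fun s => G t s y)
        = fun s => 1 / 2 * (u t s y ^ 2 + v t s y ^ 2) + g * h t s y :=
      funext fun s => hG t s y
    rw [px, hfun]
    exact ((((Hux.pow 2).add (Hvx.pow 2)).const_mul (1 / 2)).add (Hhx.const_mul g)).deriv
  have hpyG : py G t x y
      = 1 / 2 * (2 * u t x y ^ 1 * py u t x y + 2 * v t x y ^ 1 * py v t x y)
        + g * py h t x y := by
    have hfun : (fun s => G t x s)
        = fun s => 1 / 2 * (u t x s ^ 2 + v t x s ^ 2) + g * h t x s :=
      funext fun s => hG t x s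
    rw [py, hfun]
    exact ((((Huy.pow 2).add (Hvy.pow 2)).const_mul (1 / 2)).add (Hhy.const_mul g)).deriv
  -- px (G * F1)
  have hpxGF : px (fun t x y => G t x y * F1 t x y) t x y
      = (1 / 2 * (2 * u t x y ^ 1 * px u t x y + 2 * v t x y ^ 1 * px v t x y)
          + g * px h t x y) * (h t x y * u t x y)
        + (1 / 2 * (u t x y ^ 2 + v t x y ^ 2) + g * h t x y)
          * (px h t x y * u t x y + h t x y * px u t x y) := by
    have hfun : (fun s => G t s y * F1 t s y)
        = fun s => (1 / 2 * (u t s y ^ 2 + v t s y ^ 2) + g * h t s y) * (h t s y * u t s y) :=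
      funext fun s => by rw [hG, hF1]
    rw [px, hfun]
    exact (((((Hux.pow 2).add (Hvx.pow 2)).const_mul (1 / 2)).add (Hhx.const_mul g)).mul
      (Hhx.mul Hux)).deriv
  have hpyGF : py (fun t x y => G t x y * F2 t x y) t x y
      = (1 / 2 * (2 * u t x y ^ 1 * py u t x y + 2 * v t x y ^ 1 * py v t x y)
          + g * py h t x y) * (h t x y * v t x y)
        + (1 / 2 * (u t x y ^ 2 + v t x y ^ 2) + g * h t x y)
          * (py h t x y * v t x y + h t x y * py v t x y) := by
    have hfun : (fun s => G t x s * F2 t x s)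
        = fun s => (1 / 2 * (u t x s ^ 2 + v t x s ^ 2) + g * h t x s) * (h t x s * v t x s) :=
      funext fun s => by rw [hG, hF2]
    rw [py, hfun]
    exact (((((Huy.pow 2).add (Hvy.pow 2)).const_mul (1 / 2)).add (Hhy.const_mul g)).mul
      (Hhy.mul Hvy)).deriv
  have mass' := mass t x y
  have momu' := momu t x y
  have momv' := momv t x y
  rw [hpxF1, hpyF2] at mass'
  rw [hpxG] at momu'
  rw [hpyG] at momv'
  rw [hpte, hpxGF, hpyGF]
  linear_combination
    (1 / 2 * (u t x y ^ 2 + v t x y ^ 2) + g * h t x y) * mass'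
    + (h t x y * u t x y) * momu' + (h t x y * v t x y) * momv'
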